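/- Let α, β ∈ (0,1) and k₀, k₁ ∈ ℝ. Then u(x,t) = k₀ + k₁² ((Γ(β+1))²/Γ(α+1)) t^α + k₁ x^β is an exact solution of the time-space fractional nonlinear diffusion equation: for all x > 0 and t > 0, (C_t^α u)(x,t) = ((C_x^β u)(x,t))² + u (C_x^β (C_x^β u))(x,t), where u = u(x,t). -/

import Mathlib

/-- Caputo fractional partial derivative of order `α` with respect to `t`. -/
noncomputable def caputoT (α : ℝ) (u : ℝ → ℝ → ℝ) : ℝ → ℝ → ℝ := fun x t =>
  (1 / Real.Gamma (1 - α)) * ∫ s in (0:ℝ)..t, deriv (fun s' => u x s') s * (t - s) ^ (-α)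

/-- Caputo fractional partial derivative of order `β` with respect to `x`. -/
noncomputable def caputoX (β : ℝ) (u : ℝ → ℝ → ℝ) : ℝ → ℝ → ℝ := fun x t =>
  (1 / Real.Gamma (1 - β)) * ∫ y in (0:ℝ)..x, deriv (fun y' => u y' t) y * (x - y) ^ (-β)

/-- The exact solution `u(x,t) = k₀ + k₁² (Γ(β+1))²/Γ(α+1) t^α + k₁ x^β`. -/
noncomputable def uSol (α β k₀ k₁ : ℝ) : ℝ → ℝ → ℝ := fun x t =>
  k₀ + k₁ ^ 2 * (Real.Gamma (β + 1) ^ 2 / Real.Gamma (α + 1)) * t ^ α + k₁ * x ^ β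


open MeasureTheory Set

/-- Beta integral with exponents summing to one. -/
lemma beta_one {γ T : ℝ} (hγ0 : 0 < γ) (hγ1 : γ < 1) (hT : 0 < T) :
    (∫ s in (0:ℝ)..T, s ^ (γ - 1) * (T - s) ^ (-γ)) =
      Real.Gamma γ * Real.Gamma (1 - γ) := by
  have h1 : (0:ℝ) < 1 - γ := by linarith
  have hc := Complex.betaIntegral_scaled (γ : ℂ) ((1 - γ : ℝ) : ℂ) hT
  have hre : (γ:ℂ) + ((1 - γ : ℝ) : ℂ) - 1 = 0 := by push_cast; ring
  rw [hre, Complex.cpow_zero, one_mul] at hc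
  have hbeta : Complex.betaIntegral (γ : ℂ) ((1 - γ : ℝ) : ℂ)
      = ((Real.Gamma γ * Real.Gamma (1 - γ) : ℝ) : ℂ) := by
    have h := Complex.Gamma_mul_Gamma_eq_betaIntegral
      (s := (γ:ℂ)) (t := ((1 - γ : ℝ) : ℂ)) (by simpa using hγ0) (by simpa using h1)
    have hone : (γ:ℂ) + ((1 - γ : ℝ) : ℂ) = 1 := by push_cast; ring
    rw [hone, Complex.Gamma_one, one_mul] at h
    rw [← h, Complex.Gamma_ofReal, Complex.Gamma_ofReal]
    push_cast; ring
  have hint : (∫ x in (0:ℝ)..T, (x : ℂ) ^ ((γ:ℂ) - 1) * ((T : ℂ) - x) ^ (((1 - γ : ℝ) : ℂ) - 1))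
      = ((∫ s in (0:ℝ)..T, s ^ (γ - 1) * (T - s) ^ (-γ) : ℝ) : ℂ) := by
    rw [← intervalIntegral.integral_ofReal]
    apply intervalIntegral.integral_congr_ae
    filter_upwards with s hs
    rw [Set.uIoc_of_le hT.le] at hs
    push_cast
    rw [Complex.ofReal_cpow hs.1.le, Complex.ofReal_cpow (by linarith [hs.2] : (0:ℝ) ≤ T - s)]
    push_cast
    ring_nf
  rw [hint, hbeta] at hc
  exact_mod_cast hc

lemma deriv_uSol_t (α β k₀ k₁ x s : ℝ) (hs : 0 < s) :
    deriv (fun s' => uSol α β k₀ k₁ x s') s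
      = k₁ ^ 2 * (Real.Gamma (β + 1) ^ 2 / Real.Gamma (α + 1)) * (α * s ^ (α - 1)) := by
  have h := (((Real.hasDerivAt_rpow_const (x := s) (p := α) (Or.inl hs.ne')).const_mul
    (k₁ ^ 2 * (Real.Gamma (β + 1) ^ 2 / Real.Gamma (α + 1)))).const_add k₀).add_const
    (k₁ * x ^ β)
  exact h.deriv

lemma deriv_uSol_x (α β k₀ k₁ t y : ℝ) (hy : 0 < y) :
    deriv (fun y' => uSol α β k₀ k₁ y' t) y = k₁ * (β * y ^ (β - 1)) := by
  have h := (((Real.hasDerivAt_rpow_const (x := y) (p := β) (Or.inl hy.ne')).const_mul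
    k₁)).const_add (k₀ + k₁ ^ 2 * (Real.Gamma (β + 1) ^ 2 / Real.Gamma (α + 1)) * t ^ α)
  exact h.deriv

lemma caputoX_apply (β : ℝ) (u : ℝ → ℝ → ℝ) (x t : ℝ) :
    caputoX β u x t =
      (1 / Real.Gamma (1 - β)) * ∫ y in (0:ℝ)..x, deriv (fun y' => u y' t) y * (x - y) ^ (-β) :=
  rfl

lemma caputoX_uSol (α β k₀ k₁ : ℝ) (hβ : β ∈ Set.Ioo (0:ℝ) 1) (x : ℝ) (hx : 0 < x) (t : ℝ) :
    caputoX β (uSol α β k₀ k₁) x t = k₁ * Real.Gamma (β + 1) := by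
  have hΓ : Real.Gamma (1 - β) ≠ 0 := (Real.Gamma_pos_of_pos (by linarith [hβ.2])).ne'
  rw [caputoX_apply,
    intervalIntegral.integral_congr_ae (g := fun y => (k₁ * β) * (y ^ (β - 1) * (x - y) ^ (-β)))
      (by
        filter_upwards with y hy
        rw [Set.uIoc_of_le hx.le] at hy
        rw [deriv_uSol_x α β k₀ k₁ t y hy.1]; ring),
    intervalIntegral.integral_const_mul, beta_one hβ.1 hβ.2 hx,
    Real.Gamma_add_one hβ.1.ne']
  field_simp

lemma caputoT_uSol (α β k₀ k₁ : ℝ) (hα : α ∈ Set.Ioo (0:ℝ) 1) (x t : ℝ) (ht : 0 < t) :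
    caputoT α (uSol α β k₀ k₁) x t = k₁ ^ 2 * Real.Gamma (β + 1) ^ 2 := by
  have hΓ : Real.Gamma (1 - α) ≠ 0 := (Real.Gamma_pos_of_pos (by linarith [hα.2])).ne'
  have hΓ2 : Real.Gamma (α + 1) ≠ 0 := (Real.Gamma_pos_of_pos (by linarith [hα.1])).ne'
  rw [caputoT,
    intervalIntegral.integral_congr_ae
      (g := fun s => (k₁ ^ 2 * (Real.Gamma (β + 1) ^ 2 / Real.Gamma (α + 1)) * α)
        * (s ^ (α - 1) * (t - s) ^ (-α)))
      (by
        filter_upwards with s hs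
        rw [Set.uIoc_of_le ht.le] at hs
        rw [deriv_uSol_t α β k₀ k₁ x s hs.1]; ring),
    intervalIntegral.integral_const_mul, beta_one hα.1 hα.2 ht]
  have hadd : Real.Gamma (α + 1) = α * Real.Gamma α := Real.Gamma_add_one hα.1.ne'
  have hΓα : Real.Gamma α ≠ 0 := (Real.Gamma_pos_of_pos hα.1).ne'
  rw [hadd]
  have hαne : α ≠ 0 := hα.1.ne'
  field_simp

lemma caputoXX_uSol (α β k₀ k₁ : ℝ) (hβ : β ∈ Set.Ioo (0:ℝ) 1) (x : ℝ) (hx : 0 < x) (t : ℝ) :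
    caputoX β (caputoX β (uSol α β k₀ k₁)) x t = 0 := by
  rw [caputoX_apply]
  have : (∫ y in (0:ℝ)..x, deriv (fun y' => caputoX β (uSol α β k₀ k₁) y' t) y
      * (x - y) ^ (-β)) = 0 := by
    rw [intervalIntegral.integral_congr_ae (g := fun _ => (0:ℝ))
      (by
        filter_upwards with y hy
        rw [Set.uIoc_of_le hx.le] at hy
        have heq : (fun y' => caputoX β (uSol α β k₀ k₁) y' t)
            =ᶠ[nhds y] fun _ => k₁ * Real.Gamma (β + 1) :=
          Filter.eventually_of_mem (Ioi_mem_nhds hy.1)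
            (fun z hz => caputoX_uSol α β k₀ k₁ hβ z hz t)
        rw [heq.deriv_eq, deriv_const]
        ring)]
    simp
  rw [this, mul_zero]

/-- **Exact solution of the time-space fractional nonlinear diffusion equation**
`C_t^α u = (C_x^β u)² + u C_x^β(C_x^β u)` for all `x > 0`, `t > 0`. -/
theorem fractional_nonlinear_diffusion_exact (α β k₀ k₁ : ℝ)
    (hα : α ∈ Set.Ioo (0 : ℝ) 1) (hβ : β ∈ Set.Ioo (0 : ℝ) 1) :
    ∀ x : ℝ, 0 < x → ∀ t : ℝ, 0 < t →
      caputoT α (uSol α β k₀ k₁) x t =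
        (caputoX β (uSol α β k₀ k₁) x t) ^ 2
          + uSol α β k₀ k₁ x t * caputoX β (caputoX β (uSol α β k₀ k₁)) x t := by
  intro x hx t ht
  rw [caputoT_uSol α β k₀ k₁ hα x t ht, caputoX_uSol α β k₀ k₁ hβ x hx t,
    caputoXX_uSol α β k₀ k₁ hβ x hx t, mul_zero, add_zero]
  ring
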